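/- Let π : (0,∞) → (0,∞) be a continuously differentiable probability density satisfying ∫₀^1 |u π'(u)| du < ∞ and such that ξ = lim_{u→∞} u π'(u)/π(u) exists in [-∞,∞] with ξ > -∞. Then for any α, β > 0, ∫₀^∞ |u π'(u)|/(β+u)^α du < ∞. -/

import Mathlib

open Real Set Filter MeasureTheory

theorem integrable_u_pi_deriv_div
    (pdf : ℝ → ℝ)
    (hpos : ∀ u ∈ Set.Ioi (0:ℝ), 0 < pdf u)
    (hC1 : ContDiffOn ℝ 1 pdf (Set.Ioi 0))
    (hint : IntegrableOn (fun u => |u * deriv pdf u|) (Set.Ioo (0:ℝ) 1))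
    (hprob : ∫ u in Set.Ioi (0:ℝ), pdf u = 1)
    (ξ : EReal) (hξbot : ξ ≠ ⊥)
    (hξ : Filter.Tendsto (fun u : ℝ => ((u * deriv pdf u / pdf u : ℝ) : EReal))
      Filter.atTop (nhds ξ))
    (α β : ℝ) (hα : 0 < α) (hβ : 0 < β) :
    IntegrableOn (fun u => |u * deriv pdf u| / (β + u) ^ α) (Set.Ioi 0) := by
  set g : ℝ → ℝ := fun u => |u * deriv pdf u| / (β + u) ^ α with hg_def
  -- pdf is integrable
  have hpdfInt : IntegrableOn pdf (Set.Ioi 0) := by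
    by_contra h
    rw [MeasureTheory.integral_undef h] at hprob
    norm_num at hprob
  have hderiv_cont : ContinuousOn (deriv pdf) (Set.Ioi 0) :=
    hC1.continuousOn_deriv_of_isOpen isOpen_Ioi le_rfl
  have hpdf_cont : ContinuousOn pdf (Set.Ioi 0) := hC1.continuousOn
  have hden_pos : ∀ u : ℝ, 0 < u → 0 < (β + u) ^ α := fun u hu =>
    rpow_pos_of_pos (by linarith) α
  have hden_ge : ∀ u : ℝ, 0 ≤ u → β ^ α ≤ (β + u) ^ α := fun u hu =>
    rpow_le_rpow hβ.le (by linarith) hα.le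
  have hβα : 0 < β ^ α := rpow_pos_of_pos hβ α
  -- g is continuous on Ioi 0
  have hg_cont : ContinuousOn g (Set.Ioi 0) := by
    apply ContinuousOn.div ((continuousOn_id.mul hderiv_cont).abs)
    · exact ((continuousOn_const.add continuousOn_id)).rpow_const
        (fun x hx => Or.inl (by simp only [mem_Ioi] at hx; exact (show (0:ℝ) < β + x by linarith).ne'))
    · exact fun x hx => (hden_pos x hx).ne'
  have hg_nonneg : ∀ u : ℝ, 0 < u → 0 ≤ g u := fun u hu =>
    div_nonneg (abs_nonneg _) (hden_pos u hu).le
  -- Piece A : on Ioo 0 1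
  have hA : IntegrableOn g (Set.Ioo (0:ℝ) 1) := by
    apply Integrable.mono' (hint.div_const (β ^ α))
    · exact (hg_cont.mono Ioo_subset_Ioi_self).aestronglyMeasurable measurableSet_Ioo
    · filter_upwards [ae_restrict_mem measurableSet_Ioo] with u hu
      rw [Real.norm_eq_abs, abs_of_nonneg (hg_nonneg u hu.1)]
      exact div_le_div_of_nonneg_left (abs_nonneg _) hβα (hden_ge u hu.1.le)
  -- case split on ξ
  rcases eq_or_ne ξ ⊤ with hξtop | hξtop
  · -- ξ = ⊤ is impossible
    exfalso
    rw [hξtop, EReal.tendsto_nhds_top_iff_real] at hξ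
    have h1 : ∀ᶠ u : ℝ in atTop, (1:ℝ) < u * deriv pdf u / pdf u := by
      filter_upwards [hξ 1] with u hu
      exact_mod_cast hu
    obtain ⟨a, ha⟩ := (h1.and (eventually_ge_atTop (1:ℝ))).exists_forall_of_atTop
    set M := max a 1 with hM
    have hM1 : (1:ℝ) ≤ M := le_max_right a 1
    have hM0 : (0:ℝ) < M := by linarith
    have hMmem : M ∈ Set.Ioi (0:ℝ) := hM0
    have hd : ∀ u : ℝ, M ≤ u → 0 < deriv pdf u := by
      intro u hu
      have hu0 : (0:ℝ) < u := lt_of_lt_of_le hM0 hu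
      have hp : 0 < pdf u := hpos u hu0
      have := (ha u (le_trans (le_max_left a 1) hu)).1
      have h2 : pdf u < u * deriv pdf u := by
        rwa [one_lt_div hp] at this
      nlinarith
    have hmono : StrictMonoOn pdf (Set.Ici M) := by
      apply strictMonoOn_of_deriv_pos (convex_Ici M)
      · exact hpdf_cont.mono (fun x hx => lt_of_lt_of_le hM0 hx)
      · intro x hx
        rw [interior_Ici] at hx
        exact hd x (le_of_lt hx)
    have hcM : 0 < pdf M := hpos M hMmem
    have hfin := (hpdfInt.mono_set (Set.Ioi_subset_Ioi hM0.le)).measure_ge_lt_top hcM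
    have hsub : Set.Ioi M ⊆ {x : ℝ | pdf M ≤ pdf x} := fun x hx =>
      (hmono (self_mem_Ici) (Set.mem_Ici.mpr (le_of_lt (Set.mem_Ioi.mp hx))) hx).le
    have : (volume.restrict (Set.Ioi M)) (Set.Ioi M) < ⊤ :=
      lt_of_le_of_lt (measure_mono hsub) hfin
    rw [Measure.restrict_apply' measurableSet_Ioi, Set.inter_self, Real.volume_Ioi] at this
    exact (lt_irrefl _ this)
  · -- ξ finite
    lift ξ to ℝ using ⟨hξtop, hξbot⟩ with r
    rw [EReal.tendsto_coe] at hξ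
    have h1 : ∀ᶠ u : ℝ in atTop, |u * deriv pdf u / pdf u - r| < 1 :=
      hξ (Metric.ball_mem_nhds r one_pos)
    obtain ⟨a, ha⟩ := (h1.and (eventually_ge_atTop (1:ℝ))).exists_forall_of_atTop
    set M := max a 1 with hM
    have hM1 : (1:ℝ) ≤ M := le_max_right a 1
    have hM0 : (0:ℝ) < M := by linarith
    -- bound |u * pdf' u| ≤ (|r|+1) * pdf u on Ioi M
    have hbound : ∀ u : ℝ, M < u → |u * deriv pdf u| ≤ (|r| + 1) * pdf u := by
      intro u hu
      have hu0 : (0:ℝ) < u := lt_trans hM0 hu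
      have hp : 0 < pdf u := hpos u hu0
      have h2 := (ha u (le_of_lt (lt_of_le_of_lt (le_max_left a 1) hu))).1
      have h3 : |u * deriv pdf u / pdf u| ≤ |r| + 1 := by
        calc |u * deriv pdf u / pdf u| ≤ |u * deriv pdf u / pdf u - r| + |r| := by
              have := abs_sub_abs_le_abs_sub (u * deriv pdf u / pdf u) r
              linarith [abs_nonneg (u * deriv pdf u / pdf u - r)]
          _ ≤ |r| + 1 := by linarith
      rw [abs_div, abs_of_pos hp, div_le_iff₀ hp] at h3
      exact h3
    -- Piece C : on Ioi M
    have hC : IntegrableOn g (Set.Ioi M) := by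
      have hint' : IntegrableOn (fun u => ((|r| + 1) / β ^ α) * pdf u) (Set.Ioi M) :=
        ((hpdfInt.mono_set (Set.Ioi_subset_Ioi hM0.le)).const_mul _)
      apply Integrable.mono' hint'
      · exact (hg_cont.mono (fun x hx => lt_trans hM0 hx)).aestronglyMeasurable
          measurableSet_Ioi
      · filter_upwards [ae_restrict_mem measurableSet_Ioi] with u hu
        have hu0 : (0:ℝ) < u := lt_trans hM0 hu
        rw [Real.norm_eq_abs, abs_of_nonneg (hg_nonneg u hu0)]
        calc g u ≤ |u * deriv pdf u| / β ^ α :=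
              div_le_div_of_nonneg_left (abs_nonneg _) hβα (hden_ge u hu0.le)
          _ ≤ ((|r| + 1) * pdf u) / β ^ α :=
              by gcongr; exact hbound u hu
          _ = ((|r| + 1) / β ^ α) * pdf u := by ring
    -- Piece B : on Icc 1 M
    have hB : IntegrableOn g (Set.Icc (1:ℝ) M) :=
      (hg_cont.mono (fun x hx => lt_of_lt_of_le one_pos hx.1)).integrableOn_compact
        isCompact_Icc
    -- assemble
    have hunion : Set.Ioi (0:ℝ) ⊆ (Set.Ioo (0:ℝ) 1 ∪ Set.Icc (1:ℝ) M) ∪ Set.Ioi M := by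
      intro x hx
      rcases lt_or_ge x 1 with h | h
      · exact Or.inl (Or.inl ⟨hx, h⟩)
      · rcases le_or_gt x M with h' | h'
        · exact Or.inl (Or.inr ⟨h, h'⟩)
        · exact Or.inr h'
    exact ((hA.union hB).union hC).mono_set hunion
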